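/- Let I ⊆ K[x_0,…,x_n] be a homogeneous ideal and w' ∈ Γ^{n+1} with in_{w'}(I) a monomial ideal. Let g_1,…,g_s ∈ I with in_{w'}(I) = ⟨in_{w'}(g_1),…,in_{w'}(g_s)⟩, where g_i = x^{u_i} + Σ_v c_{iv} x^v with in_{w'}(g_i) = x^{u_i} and c_{iv} ≠ 0 implies x^v ∉ in_{w'}(I). Then the closure of C_I[w'] in ℝ^{n+1} equals {x ∈ ℝ^{n+1} : x·u_i ≤ val(c_{iv}) + x·v for all 1 ≤ i ≤ s and all v with c_{iv} ≠ 0}. -/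

import Mathlib

open MvPolynomial
open scoped Classical

noncomputable section

/-- Dot product `w·u` of a real weight vector with a nonnegative exponent vector. -/
def dotN {m : ℕ} (w : Fin m → ℝ) (u : Fin m →₀ ℕ) : ℝ := ∑ i, w i * (u i : ℝ)

/-- Dot product `w·u` of a real weight vector with an integer exponent vector. -/
def dotZ {n : ℕ} (w : Fin n → ℝ) (u : Fin n → ℤ) : ℝ := ∑ i, w i * (u i : ℝ)

/-- Dot product of two real vectors. -/
def dotR {m : ℕ} (c x : Fin m → ℝ) : ℝ := ∑ i, c i * x i

/-- A field `K` together with: a nontrivial real-valued (additive) valuation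
`val : K* → ℝ` (recorded as a function on `K`, constrained only at nonzero elements);
a residue field `𝕜` with the reduction map `res : K → 𝕜` (the canonical map
`R → 𝕜 = R/𝔪` on the valuation ring `R = {a : val a ≥ 0}`, junk elsewhere); and a fixed
splitting `t` of the valuation, i.e. a group-homomorphic section `w ↦ t^w` of `val`
defined on the value group `Γ = im val`. -/
structure ValSetup (K 𝕜 : Type) [Field K] [Field 𝕜] where
  val : K → ℝ
  val_mul : ∀ {a b : K}, a ≠ 0 → b ≠ 0 → val (a * b) = val a + val b
  val_add : ∀ {a b : K}, a ≠ 0 → b ≠ 0 → a + b ≠ 0 → min (val a) (val b) ≤ val (a + b)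
  val_one : val 1 = 0
  val_nontrivial : ∃ a : K, a ≠ 0 ∧ val a ≠ 0
  res : K → 𝕜
  res_add : ∀ {a b : K}, (a = 0 ∨ 0 ≤ val a) → (b = 0 ∨ 0 ≤ val b) → res (a + b) = res a + res b
  res_mul : ∀ {a b : K}, (a = 0 ∨ 0 ≤ val a) → (b = 0 ∨ 0 ≤ val b) → res (a * b) = res a * res b
  res_one : res 1 = 1
  res_zero : res 0 = 0
  res_eq_zero_iff : ∀ {a : K}, a ≠ 0 → 0 ≤ val a → (res a = 0 ↔ 0 < val a)
  res_surjective : ∀ c : 𝕜, ∃ a : K, (a = 0 ∨ 0 ≤ val a) ∧ res a = c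
  t : ℝ → K
  t_ne_zero : ∀ {r : ℝ}, (∃ a : K, a ≠ 0 ∧ val a = r) → t r ≠ 0
  t_add : ∀ {r₁ r₂ : ℝ}, (∃ a : K, a ≠ 0 ∧ val a = r₁) → (∃ a : K, a ≠ 0 ∧ val a = r₂) →
    t (r₁ + r₂) = t r₁ * t r₂
  val_t : ∀ {r : ℝ}, (∃ a : K, a ≠ 0 ∧ val a = r) → val (t r) = r

namespace ValSetup

variable {K 𝕜 : Type} [Field K] [Field 𝕜]

/-- The value group `Γ = val(K*) ⊆ ℝ`. -/
def Gamma (V : ValSetup K 𝕜) : Set ℝ := {r : ℝ | ∃ a : K, a ≠ 0 ∧ V.val a = r}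

/-- `trop(f)(w) = min { val(c_u) + w·u : c_u ≠ 0 }` for `f = Σ_u c_u x^u ∈ K[x_0,…,x_{m-1}]`. -/
def trop (V : ValSetup K 𝕜) {m : ℕ} (f : MvPolynomial (Fin m) K) (w : Fin m → ℝ) : ℝ :=
  sInf ((fun u => V.val (coeff u f) + dotN w u) '' (f.support : Set (Fin m →₀ ℕ)))

/-- The initial form `in_w(f) = Σ_{val(c_u)+w·u = trop(f)(w)} (t^{-val(c_u)} c_u)‾ x^u`
in `𝕜[x_0,…,x_{m-1}]`. -/
def initialForm (V : ValSetup K 𝕜) {m : ℕ} (w : Fin m → ℝ) (f : MvPolynomial (Fin m) K) :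
    MvPolynomial (Fin m) 𝕜 :=
  ∑ u ∈ f.support.filter (fun u => V.val (coeff u f) + dotN w u = V.trop f w),
    monomial u (V.res (V.t (-(V.val (coeff u f))) * coeff u f))

/-- The initial ideal `in_w(I) = ⟨in_w(f) : f ∈ I⟩ ⊆ 𝕜[x_0,…,x_{m-1}]`. -/
def initialIdeal (V : ValSetup K 𝕜) {m : ℕ} (w : Fin m → ℝ)
    (I : Ideal (MvPolynomial (Fin m) K)) : Ideal (MvPolynomial (Fin m) 𝕜) :=
  Ideal.span {g | ∃ f ∈ I, g = V.initialForm w f}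

/-- The Gröbner region `C_I[w] = {w' ∈ Γ^m : in_{w'}(I) = in_w(I)}`. -/
def groebnerRegion (V : ValSetup K 𝕜) {m : ℕ} (I : Ideal (MvPolynomial (Fin m) K))
    (w : Fin m → ℝ) : Set (Fin m → ℝ) :=
  {w' | (∀ i, w' i ∈ V.Gamma) ∧ V.initialIdeal w' I = V.initialIdeal w I}

end ValSetup

/-- `trop(g)(v) = min { v·u : c_u ≠ 0 }` for `g ∈ 𝕜[x]`, w.r.t. the trivial valuation on `𝕜`. -/
def tropTriv {𝕜 : Type} [Field 𝕜] {m : ℕ} (g : MvPolynomial (Fin m) 𝕜) (v : Fin m → ℝ) : ℝ :=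
  sInf ((fun u => dotN v u) '' (g.support : Set (Fin m →₀ ℕ)))

/-- Initial form `in_v(g)`, w.r.t. the trivial valuation on the residue field: the sum of the
terms of `g` whose exponents `u` minimize `v·u`. -/
def initialFormTriv {𝕜 : Type} [Field 𝕜] {m : ℕ} (v : Fin m → ℝ) (g : MvPolynomial (Fin m) 𝕜) :
    MvPolynomial (Fin m) 𝕜 :=
  ∑ u ∈ g.support.filter (fun u => dotN v u = tropTriv g v), monomial u (coeff u g)

/-- Initial ideal `in_v(J) = ⟨in_v(g) : g ∈ J⟩` w.r.t. the trivial valuation. -/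
def initialIdealTriv {𝕜 : Type} [Field 𝕜] {m : ℕ} (v : Fin m → ℝ)
    (J : Ideal (MvPolynomial (Fin m) 𝕜)) : Ideal (MvPolynomial (Fin m) 𝕜) :=
  Ideal.span {h | ∃ g ∈ J, h = initialFormTriv v g}

/-- A homogeneous ideal of `R[x_0,…,x_{m-1}]`: one containing all homogeneous components of
its elements. -/
def IsHomogIdeal {R : Type} [CommSemiring R] {m : ℕ} (I : Ideal (MvPolynomial (Fin m) R)) :
    Prop :=
  ∀ f ∈ I, ∀ d : ℕ, homogeneousComponent d f ∈ I

/-- A monomial ideal: an ideal generated by monomials. -/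
def IsMonomialIdeal {R : Type} [CommSemiring R] {m : ℕ} (J : Ideal (MvPolynomial (Fin m) R)) :
    Prop :=
  ∃ S : Set (Fin m →₀ ℕ), J = Ideal.span ((fun u => (monomial u 1 : MvPolynomial (Fin m) R)) '' S)

/-! ### Auxiliary lemmas -/

section Helpers

open MvPolynomial Finset

variable {K 𝕜 : Type} [Field K] [Field 𝕜] (V : ValSetup K 𝕜) {m : ℕ}

namespace ValSetup

lemma zero_mem_Gamma : (0:ℝ) ∈ V.Gamma := ⟨1, one_ne_zero, V.val_one⟩

lemma val_mem_Gamma {a : K} (ha : a ≠ 0) : V.val a ∈ V.Gamma := ⟨a, ha, rfl⟩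

lemma add_mem_Gamma {r s : ℝ} (hr : r ∈ V.Gamma) (hs : s ∈ V.Gamma) : r + s ∈ V.Gamma := by
  obtain ⟨a, ha, rfl⟩ := hr; obtain ⟨b, hb, rfl⟩ := hs
  exact ⟨a * b, mul_ne_zero ha hb, V.val_mul ha hb⟩

lemma neg_mem_Gamma {r : ℝ} (hr : r ∈ V.Gamma) : -r ∈ V.Gamma := by
  obtain ⟨a, ha, rfl⟩ := hr
  refine ⟨a⁻¹, inv_ne_zero ha, ?_⟩
  have h := V.val_mul ha (inv_ne_zero ha)
  rw [mul_inv_cancel₀ ha, V.val_one] at h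
  linarith

lemma nsmul_mem_Gamma (k : ℕ) {r : ℝ} (hr : r ∈ V.Gamma) : (k : ℝ) * r ∈ V.Gamma := by
  induction k with
  | zero => simpa using V.zero_mem_Gamma
  | succ k ih =>
      have : ((k+1 : ℕ) : ℝ) * r = (k : ℝ) * r + r := by push_cast; ring
      rw [this]; exact V.add_mem_Gamma ih hr

lemma sum_mem_Gamma {ι : Type*} (s : Finset ι) (f : ι → ℝ) (h : ∀ i ∈ s, f i ∈ V.Gamma) :
    (∑ i ∈ s, f i) ∈ V.Gamma := by
  classical
  induction s using Finset.induction with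
  | empty => simpa using V.zero_mem_Gamma
  | insert _ _ hx ih =>
      rw [Finset.sum_insert hx]
      exact V.add_mem_Gamma (h _ (Finset.mem_insert_self _ _))
        (ih fun i hi => h i (Finset.mem_insert_of_mem hi))

lemma dotN_mem_Gamma {w : Fin m → ℝ} (hw : ∀ i, w i ∈ V.Gamma) (u : Fin m →₀ ℕ) :
    dotN w u ∈ V.Gamma := by
  refine V.sum_mem_Gamma _ _ fun i _ => ?_
  have : w i * (u i : ℝ) = (u i : ℝ) * w i := mul_comm _ _
  rw [this]; exact V.nsmul_mem_Gamma _ (hw i)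

lemma t_zero : V.t 0 = 1 := by
  have h0 : (0:ℝ) ∈ V.Gamma := V.zero_mem_Gamma
  have h := V.t_add h0 h0
  rw [add_zero] at h
  have hne : V.t 0 ≠ 0 := V.t_ne_zero h0
  have h2 : V.t 0 * (1 : K) = V.t 0 * V.t 0 := by rw [mul_one]; exact h
  exact (mul_left_cancel₀ hne h2).symm

lemma val_t' {r : ℝ} (hr : r ∈ V.Gamma) : V.val (V.t r) = r := V.val_t hr

lemma t_neg_mul {r : ℝ} (hr : r ∈ V.Gamma) : V.t (-r) * V.t r = 1 := by
  have h := V.t_add (V.neg_mem_Gamma hr) hr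
  rw [neg_add_cancel] at h
  rw [← h, V.t_zero]

lemma res_ne_zero_of_val_eq_zero {a : K} (ha : a ≠ 0) (h : V.val a = 0) : V.res a ≠ 0 := by
  intro hres
  have := (V.res_eq_zero_iff ha (le_of_eq h.symm)).1 hres
  rw [h] at this
  exact lt_irrefl _ this

/-! ### trop and initialForm basics -/

variable {w : Fin m → ℝ} {f g : MvPolynomial (Fin m) K}

lemma trop_le {u : Fin m →₀ ℕ} (hu : u ∈ f.support) :
    V.trop f w ≤ V.val (coeff u f) + dotN w u := by
  apply csInf_le
  · exact (((f.support : Set (Fin m →₀ ℕ)).toFinite).image _).bddBelow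
  · exact Set.mem_image_of_mem _ (by exact_mod_cast hu)

lemma exists_trop_eq (hf : f ≠ 0) :
    ∃ u ∈ f.support, V.val (coeff u f) + dotN w u = V.trop f w := by
  have hne : ((fun u => V.val (coeff u f) + dotN w u) ''
      (f.support : Set (Fin m →₀ ℕ))).Nonempty := by
    refine Set.Nonempty.image _ ?_
    rcases (support_nonempty.2 hf) with ⟨u, hu⟩
    exact ⟨u, by exact_mod_cast hu⟩
  have hfin : ((fun u => V.val (coeff u f) + dotN w u) ''
      (f.support : Set (Fin m →₀ ℕ))).Finite :=
    ((f.support : Set (Fin m →₀ ℕ)).toFinite).image _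
  have := hne.csInf_mem hfin
  rcases this with ⟨u, hu, hval⟩
  exact ⟨u, by exact_mod_cast hu, hval⟩

lemma le_trop (hf : f ≠ 0) {c : ℝ}
    (h : ∀ u ∈ f.support, c ≤ V.val (coeff u f) + dotN w u) : c ≤ V.trop f w := by
  apply le_csInf
  · refine Set.Nonempty.image _ ?_
    rcases (support_nonempty.2 hf) with ⟨u, hu⟩
    exact ⟨u, by exact_mod_cast hu⟩
  · rintro b ⟨u, hu, rfl⟩
    exact h u (by exact_mod_cast hu)

lemma trop_mem_Gamma (hw : ∀ i, w i ∈ V.Gamma) (hf : f ≠ 0) : V.trop f w ∈ V.Gamma := by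
  obtain ⟨u, hu, heq⟩ := V.exists_trop_eq (w := w) hf
  rw [← heq]
  exact V.add_mem_Gamma (V.val_mem_Gamma (mem_support_iff.1 hu)) (V.dotN_mem_Gamma hw u)

lemma coeff_initialForm (u : Fin m →₀ ℕ) :
    coeff u (V.initialForm w f) =
      if u ∈ f.support ∧ V.val (coeff u f) + dotN w u = V.trop f w
      then V.res (V.t (-(V.val (coeff u f))) * coeff u f) else 0 := by
  classical
  rw [ValSetup.initialForm, coeff_sum]
  simp only [coeff_monomial]
  rw [Finset.sum_ite_eq' (f.support.filter fun v => V.val (coeff v f) + dotN w v = V.trop f w) u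
    (fun v => V.res (V.t (-(V.val (coeff v f))) * coeff v f))]
  simp [Finset.mem_filter]

lemma initialCoeff_ne_zero {u : Fin m →₀ ℕ} (hu : u ∈ f.support) :
    V.res (V.t (-(V.val (coeff u f))) * coeff u f) ≠ 0 := by
  have hc : coeff u f ≠ 0 := mem_support_iff.1 hu
  have hγ : V.val (coeff u f) ∈ V.Gamma := V.val_mem_Gamma hc
  have htne : V.t (-(V.val (coeff u f))) ≠ 0 := V.t_ne_zero (V.neg_mem_Gamma hγ)
  have hne : V.t (-(V.val (coeff u f))) * coeff u f ≠ 0 := mul_ne_zero htne hc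
  have hval : V.val (V.t (-(V.val (coeff u f))) * coeff u f) = 0 := by
    rw [V.val_mul htne hc, V.val_t' (V.neg_mem_Gamma hγ)]
    ring
  exact V.res_ne_zero_of_val_eq_zero hne hval

lemma support_initialForm :
    (V.initialForm w f).support =
      f.support.filter (fun u => V.val (coeff u f) + dotN w u = V.trop f w) := by
  classical
  ext u
  rw [mem_support_iff, V.coeff_initialForm]
  by_cases h : u ∈ f.support ∧ V.val (coeff u f) + dotN w u = V.trop f w
  · rw [if_pos h, Finset.mem_filter]
    exact ⟨fun _ => h, fun _ => V.initialCoeff_ne_zero h.1⟩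
  · rw [if_neg h, Finset.mem_filter]
    constructor
    · intro hne; exact absurd rfl hne
    · intro hmem; exact absurd hmem h

lemma initialForm_zero : V.initialForm w (0 : MvPolynomial (Fin m) K) = 0 := by
  rw [ValSetup.initialForm]
  simp
  exact Finset.sum_eq_zero fun x _ => by rw [V.res_zero, map_zero]

lemma initialForm_ne_zero (hf : f ≠ 0) : V.initialForm w f ≠ 0 := by
  obtain ⟨u, hu, heq⟩ := V.exists_trop_eq (w := w) hf
  intro h0
  have : u ∈ (V.initialForm w f).support := by
    rw [V.support_initialForm, Finset.mem_filter]; exact ⟨hu, heq⟩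
  rw [h0] at this
  simp at this

lemma support_initialForm_subset : (V.initialForm w f).support ⊆ f.support := by
  rw [V.support_initialForm]; exact Finset.filter_subset _ _

end ValSetup

end Helpers
section Helpers2

open MvPolynomial Finset

variable {K 𝕜 : Type} [Field K] [Field 𝕜] (V : ValSetup K 𝕜) {m : ℕ}

lemma dotN_add_vec (x y : Fin m → ℝ) (u : Fin m →₀ ℕ) :
    dotN (x + y) u = dotN x u + dotN y u := by
  rw [dotN, dotN, dotN, ← Finset.sum_add_distrib]
  exact Finset.sum_congr rfl fun i _ => by simp [add_mul]

lemma dotN_smul_vec (c : ℝ) (x : Fin m → ℝ) (u : Fin m →₀ ℕ) :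
    dotN (c • x) u = c * dotN x u := by
  rw [dotN, dotN, Finset.mul_sum]
  exact Finset.sum_congr rfl fun i _ => by simp [mul_assoc]

lemma dotN_add_exp (w : Fin m → ℝ) (a b : Fin m →₀ ℕ) :
    dotN w (a + b) = dotN w a + dotN w b := by
  rw [dotN, dotN, dotN, ← Finset.sum_add_distrib]
  refine Finset.sum_congr rfl fun i _ => ?_
  have : ((a + b) i : ℝ) = (a i : ℝ) + (b i : ℝ) := by
    simp [Finsupp.add_apply]
  rw [this, mul_add]

lemma dotN_continuous (u : Fin m →₀ ℕ) : Continuous (fun x : Fin m → ℝ => dotN x u) := by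
  refine continuous_finset_sum _ fun i _ => ?_
  exact (continuous_apply i).mul continuous_const

namespace ValSetup

variable {w : Fin m → ℝ} {f g : MvPolynomial (Fin m) K}

lemma trop_of_strict {u₀ : Fin m →₀ ℕ} (h0 : coeff u₀ f = 1)
    (hs : ∀ v ∈ f.support, v ≠ u₀ → dotN w u₀ < V.val (coeff v f) + dotN w v) :
    V.trop f w = dotN w u₀ := by
  have hmem : u₀ ∈ f.support := mem_support_iff.2 (by rw [h0]; exact one_ne_zero)
  have hf : f ≠ 0 := fun h => by simp [h] at hmem
  have h1 : V.trop f w ≤ dotN w u₀ := by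
    have := V.trop_le (w := w) hmem
    rwa [h0, V.val_one, zero_add] at this
  have h2 : dotN w u₀ ≤ V.trop f w := by
    refine V.le_trop hf fun v hv => ?_
    by_cases hvu : v = u₀
    · subst hvu; rw [h0, V.val_one, zero_add]
    · exact le_of_lt (hs v hv hvu)
  linarith

lemma initialForm_of_strict {u₀ : Fin m →₀ ℕ} (h0 : coeff u₀ f = 1)
    (hs : ∀ v ∈ f.support, v ≠ u₀ → dotN w u₀ < V.val (coeff v f) + dotN w v) :
    V.initialForm w f = monomial u₀ 1 := by
  classical
  have hmem : u₀ ∈ f.support := mem_support_iff.2 (by rw [h0]; exact one_ne_zero)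
  have htrop := V.trop_of_strict h0 hs
  have hfilter : f.support.filter (fun u => V.val (coeff u f) + dotN w u = V.trop f w) = {u₀} := by
    ext v
    rw [Finset.mem_filter, Finset.mem_singleton]
    constructor
    · rintro ⟨hv, heq⟩
      by_contra hne
      have := hs v hv hne
      rw [heq, htrop] at this
      exact lt_irrefl _ this
    · rintro rfl
      exact ⟨hmem, by rw [h0, V.val_one, zero_add, htrop]⟩
  rw [ValSetup.initialForm, hfilter, Finset.sum_singleton, h0, V.val_one, neg_zero, V.t_zero,
    mul_one, V.res_one]

lemma strict_of_initialForm_monomial {u₀ : Fin m →₀ ℕ} (h0 : coeff u₀ f = 1)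
    (h : V.initialForm w f = monomial u₀ 1) :
    ∀ v ∈ f.support, v ≠ u₀ → dotN w u₀ < V.val (coeff v f) + dotN w v := by
  intro v hv hne
  have hmem : u₀ ∈ f.support := mem_support_iff.2 (by rw [h0]; exact one_ne_zero)
  have hsupp : (V.initialForm w f).support = {u₀} := by
    rw [h, support_monomial]
    simp
  have hu₀filter : u₀ ∈ f.support.filter
      (fun u => V.val (coeff u f) + dotN w u = V.trop f w) := by
    rw [← V.support_initialForm, hsupp]; exact Finset.mem_singleton_self _
  have htrop : V.trop f w = dotN w u₀ := by
    have := (Finset.mem_filter.1 hu₀filter).2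
    rw [h0, V.val_one, zero_add] at this
    exact this.symm
  have hvnot : v ∉ f.support.filter (fun u => V.val (coeff u f) + dotN w u = V.trop f w) := by
    rw [← V.support_initialForm, hsupp, Finset.mem_singleton]
    exact hne
  rw [Finset.mem_filter] at hvnot
  push_neg at hvnot
  have hlt := hvnot hv
  rw [htrop] at hlt
  have hle := V.trop_le (w := w) hv
  rw [htrop] at hle
  exact lt_of_le_of_ne hle (Ne.symm hlt)

end ValSetup

end Helpers2
section Helpers2b

open MvPolynomial Finset

variable {R : Type*} [CommSemiring R] {m : ℕ}

lemma coeff_monMul (b u : Fin m →₀ ℕ) (p : MvPolynomial (Fin m) R) :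
    coeff u (monomial b (1:R) * p) = if b ≤ u then coeff (u - b) p else 0 := by
  rw [coeff_monomial_mul']
  split_ifs with h
  · rw [one_mul]
  · rfl

lemma mem_support_monMul {b u : Fin m →₀ ℕ} {p : MvPolynomial (Fin m) R} :
    u ∈ (monomial b (1:R) * p).support ↔ b ≤ u ∧ u - b ∈ p.support := by
  rw [mem_support_iff, coeff_monMul]
  split_ifs with h
  · rw [← mem_support_iff]
    exact ⟨fun h2 => ⟨h, h2⟩, fun h2 => h2.2⟩
  · simp only [ne_eq, not_true_eq_false, false_iff, not_and]
    intro hb; exact absurd hb h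

lemma dotN_sub_of_le {w : Fin m → ℝ} {b u : Fin m →₀ ℕ} (h : b ≤ u) :
    dotN w u = dotN w b + dotN w (u - b) := by
  conv_lhs => rw [← add_tsub_cancel_of_le h]
  exact dotN_add_exp w b (u - b)

lemma monMul_ne_zero {p : MvPolynomial (Fin m) R} (b : Fin m →₀ ℕ) (hp : p ≠ 0) :
    monomial b (1:R) * p ≠ 0 := by
  intro h
  rcases support_nonempty.2 hp with ⟨u, hu⟩
  have : b + u ∈ (monomial b (1:R) * p).support := by
    rw [mem_support_monMul]
    exact ⟨le_add_right le_rfl, by rwa [add_tsub_cancel_left]⟩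
  rw [h] at this
  simp at this

lemma support_C_mul {a : R} {p : MvPolynomial (Fin m) R} (ha : ∀ x : R, a * x = 0 → x = 0) :
    (C a * p).support = p.support := by
  ext u
  rw [mem_support_iff, mem_support_iff, coeff_C_mul]
  constructor
  · intro h h2; exact h (by rw [h2, mul_zero])
  · intro h h2; exact h (ha _ h2)

namespace ValSetup

variable {K 𝕜 : Type} [Field K] [Field 𝕜] (V : ValSetup K 𝕜)
variable {w : Fin m → ℝ} {f g : MvPolynomial (Fin m) K}

lemma image_support_monMul (b : Fin m →₀ ℕ) :
    ((fun u => V.val (coeff u (monomial b (1:K) * f)) + dotN w u) ''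
      ((monomial b (1:K) * f).support : Set (Fin m →₀ ℕ))) =
    (fun r => dotN w b + r) ''
      ((fun u => V.val (coeff u f) + dotN w u) '' (f.support : Set (Fin m →₀ ℕ))) := by
  ext r
  constructor
  · rintro ⟨u, hu, rfl⟩
    have hu' : u ∈ (monomial b (1:K) * f).support := hu
    obtain ⟨hb, hsub⟩ := mem_support_monMul.1 hu'
    refine ⟨V.val (coeff (u - b) f) + dotN w (u - b), ⟨u - b, hsub, rfl⟩, ?_⟩
    show dotN w b + (V.val (coeff (u - b) f) + dotN w (u - b))
      = V.val (coeff u (monomial b (1:K) * f)) + dotN w u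
    rw [coeff_monMul, if_pos hb, dotN_sub_of_le hb]
    ring
  · rintro ⟨r', ⟨u, hu, rfl⟩, rfl⟩
    have hu' : u ∈ f.support := hu
    refine ⟨b + u, ?_, ?_⟩
    · show b + u ∈ ((monomial b (1:K) * f).support : Set (Fin m →₀ ℕ))
      rw [mem_coe, mem_support_monMul]
      exact ⟨le_add_right le_rfl, by rwa [add_tsub_cancel_left]⟩
    · show V.val (coeff (b + u) (monomial b (1:K) * f)) + dotN w (b + u)
        = dotN w b + (V.val (coeff u f) + dotN w u)
      rw [coeff_monMul, if_pos (le_add_right le_rfl : b ≤ b + u), add_tsub_cancel_left,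
        dotN_add_exp]
      ring

lemma trop_monMul (b : Fin m →₀ ℕ) (hf : f ≠ 0) :
    V.trop (monomial b 1 * f) w = dotN w b + V.trop f w := by
  rw [ValSetup.trop, V.image_support_monMul b]
  have hne : ((fun u => V.val (coeff u f) + dotN w u) ''
      (f.support : Set (Fin m →₀ ℕ))).Nonempty := by
    refine Set.Nonempty.image _ ?_
    rcases support_nonempty.2 hf with ⟨u, hu⟩
    exact ⟨u, by exact_mod_cast hu⟩
  have hbdd : BddBelow ((fun u => V.val (coeff u f) + dotN w u) ''
      (f.support : Set (Fin m →₀ ℕ))) :=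
    (((f.support : Set (Fin m →₀ ℕ))).toFinite.image _).bddBelow
  have h := (OrderIso.addLeft (dotN w b)).map_csInf' hne hbdd
  rw [ValSetup.trop]
  rw [show ⇑(OrderIso.addLeft (dotN w b)) = fun r => dotN w b + r from rfl] at h
  exact h.symm

lemma initialForm_monMul (b : Fin m →₀ ℕ) (hf : f ≠ 0) :
    V.initialForm w (monomial b 1 * f) = monomial b 1 * V.initialForm w f := by
  classical
  ext u
  rw [coeff_monMul b u (V.initialForm w f), V.coeff_initialForm]
  by_cases hb : b ≤ u
  · rw [if_pos hb, V.coeff_initialForm]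
    have hco : coeff u (monomial b (1:K) * f) = coeff (u - b) f := by
      rw [coeff_monMul, if_pos hb]
    simp only [hco]
    refine if_congr ?_ rfl rfl
    constructor
    · rintro ⟨hmem, heq⟩
      obtain ⟨_, hsub⟩ := mem_support_monMul.1 hmem
      refine ⟨hsub, ?_⟩
      rw [V.trop_monMul b hf, dotN_sub_of_le hb] at heq
      linarith
    · rintro ⟨hsub, heq⟩
      refine ⟨mem_support_monMul.2 ⟨hb, hsub⟩, ?_⟩
      rw [V.trop_monMul b hf, dotN_sub_of_le hb]
      linarith
  · rw [if_neg hb, if_neg]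
    intro hcon
    exact hb (mem_support_monMul.1 hcon.1).1

lemma trop_C_t_mul {τ : ℝ} (hτ : τ ∈ V.Gamma) (hf : f ≠ 0) :
    V.trop (C (V.t τ) * f) w = τ + V.trop f w := by
  have hta : V.t τ ≠ 0 := V.t_ne_zero hτ
  have hval : V.val (V.t τ) = τ := V.val_t' hτ
  have hmulinj : ∀ x : K, V.t τ * x = 0 → x = 0 := fun x hx => by
    rcases mul_eq_zero.1 hx with h | h
    · exact absurd h hta
    · exact h
  have himg : ((fun u => V.val (coeff u (C (V.t τ) * f)) + dotN w u) ''
      ((C (V.t τ) * f).support : Set (Fin m →₀ ℕ))) =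
      (fun r => τ + r) ''
      ((fun u => V.val (coeff u f) + dotN w u) '' (f.support : Set (Fin m →₀ ℕ))) := by
    rw [support_C_mul hmulinj, ← Set.image_comp]
    refine Set.image_congr fun u hu => ?_
    have hu' : u ∈ f.support := hu
    show V.val (coeff u (C (V.t τ) * f)) + dotN w u = τ + (V.val (coeff u f) + dotN w u)
    rw [coeff_C_mul, V.val_mul hta (mem_support_iff.1 hu'), hval]
    ring
  rw [ValSetup.trop, himg]
  have hne : ((fun u => V.val (coeff u f) + dotN w u) ''
      (f.support : Set (Fin m →₀ ℕ))).Nonempty := by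
    refine Set.Nonempty.image _ ?_
    rcases support_nonempty.2 hf with ⟨u, hu⟩
    exact ⟨u, by exact_mod_cast hu⟩
  have hbdd : BddBelow ((fun u => V.val (coeff u f) + dotN w u) ''
      (f.support : Set (Fin m →₀ ℕ))) :=
    (((f.support : Set (Fin m →₀ ℕ))).toFinite.image _).bddBelow
  have h := (OrderIso.addLeft τ).map_csInf' hne hbdd
  rw [ValSetup.trop]
  rw [show ⇑(OrderIso.addLeft τ) = fun r => τ + r from rfl] at h
  exact h.symm

lemma initialForm_C_t_mul {τ : ℝ} (hτ : τ ∈ V.Gamma) (hf : f ≠ 0) :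
    V.initialForm w (C (V.t τ) * f) = V.initialForm w f := by
  classical
  have hta : V.t τ ≠ 0 := V.t_ne_zero hτ
  have hvalt : V.val (V.t τ) = τ := V.val_t' hτ
  have hmulinj : ∀ x : K, V.t τ * x = 0 → x = 0 := fun x hx => by
    rcases mul_eq_zero.1 hx with h | h
    · exact absurd h hta
    · exact h
  ext u
  rw [V.coeff_initialForm, V.coeff_initialForm]
  have hco : coeff u (C (V.t τ) * f) = V.t τ * coeff u f := coeff_C_mul u _ f
  by_cases hc : u ∈ f.support ∧ V.val (coeff u f) + dotN w u = V.trop f w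
  · have hcne : coeff u f ≠ 0 := mem_support_iff.1 hc.1
    have hvmul : V.val (V.t τ * coeff u f) = τ + V.val (coeff u f) := by
      rw [V.val_mul hta hcne, hvalt]
    rw [if_pos, if_pos hc]
    · rw [hco, hvmul]
      have hγc : V.val (coeff u f) ∈ V.Gamma := V.val_mem_Gamma hcne
      have h1 : V.t (-(τ + V.val (coeff u f))) * (V.t τ * coeff u f)
          = (V.t (-(τ + V.val (coeff u f))) * V.t τ) * coeff u f := by ring
      have h2 : V.t (-(τ + V.val (coeff u f))) * V.t τ = V.t (-(V.val (coeff u f))) := by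
        rw [← V.t_add (V.neg_mem_Gamma (V.add_mem_Gamma hτ hγc)) hτ]
        norm_num
      rw [h1, h2]
    · constructor
      · rw [support_C_mul hmulinj]; exact hc.1
      · rw [hco, hvmul, V.trop_C_t_mul hτ hf, ← hc.2]; ring
  · rw [if_neg hc, if_neg]
    intro hcon
    apply hc
    obtain ⟨hmem, heq⟩ := hcon
    rw [support_C_mul hmulinj] at hmem
    have hcne : coeff u f ≠ 0 := mem_support_iff.1 hmem
    refine ⟨hmem, ?_⟩
    rw [hco, V.val_mul hta hcne, hvalt, V.trop_C_t_mul hτ hf] at heq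
    linarith

end ValSetup

end Helpers2b
section Helpers3

open MvPolynomial Finset

namespace ValSetup

variable {K 𝕜 : Type} [Field K] [Field 𝕜] (V : ValSetup K 𝕜) {m : ℕ}

/-- Coefficientwise reduction of a polynomial with `trop ≥ 0`. -/
def redw (w : Fin m → ℝ) (f : MvPolynomial (Fin m) K) : MvPolynomial (Fin m) 𝕜 :=
  ∑ u ∈ f.support, monomial u (V.res (V.t (dotN w u) * coeff u f))

lemma coeff_redw (w : Fin m → ℝ) (f : MvPolynomial (Fin m) K) (u : Fin m →₀ ℕ) :
    coeff u (V.redw w f) = V.res (V.t (dotN w u) * coeff u f) := by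
  classical
  rw [redw, coeff_sum]
  simp only [coeff_monomial]
  rw [Finset.sum_ite_eq' f.support u (fun v => V.res (V.t (dotN w v) * coeff v f))]
  split_ifs with h
  · rfl
  · rw [notMem_support_iff.1 h, mul_zero, V.res_zero]

/-- Pointwise condition ensuring all coefficients lie in the valuation ring
(after weight twist). -/
def okw (w : Fin m → ℝ) (f : MvPolynomial (Fin m) K) : Prop :=
  ∀ u : Fin m →₀ ℕ, coeff u f = 0 ∨ 0 ≤ dotN w u + V.val (coeff u f)

lemma okw_zero (w : Fin m → ℝ) : V.okw w (0 : MvPolynomial (Fin m) K) :=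
  fun u => Or.inl (by simp)

lemma okw_of_trop_nonneg {w : Fin m → ℝ} {f : MvPolynomial (Fin m) K}
    (h : 0 ≤ V.trop f w) : V.okw w f := by
  intro u
  by_cases hu : coeff u f = 0
  · exact Or.inl hu
  · right
    have := V.trop_le (w := w) (mem_support_iff.2 hu)
    linarith

lemma okw_cond {w : Fin m → ℝ} (hw : ∀ i, w i ∈ V.Gamma) {f : MvPolynomial (Fin m) K}
    (hf : V.okw w f) (u : Fin m →₀ ℕ) :
    V.t (dotN w u) * coeff u f = 0 ∨ 0 ≤ V.val (V.t (dotN w u) * coeff u f) := by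
  by_cases hc : coeff u f = 0
  · exact Or.inl (by rw [hc, mul_zero])
  · rcases hf u with h | h
    · exact absurd h hc
    · right
      have htne : V.t (dotN w u) ≠ 0 := V.t_ne_zero (V.dotN_mem_Gamma hw u)
      rw [V.val_mul htne hc, V.val_t' (V.dotN_mem_Gamma hw u)]
      linarith

lemma okw_add {w : Fin m → ℝ} {f g : MvPolynomial (Fin m) K}
    (hf : V.okw w f) (hg : V.okw w g) : V.okw w (f + g) := by
  intro u
  rw [coeff_add]
  by_cases hfu : coeff u f = 0
  · rw [hfu, zero_add]; exact hg u
  by_cases hgu : coeff u g = 0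
  · rw [hgu, add_zero]; exact hf u
  by_cases hsum : coeff u f + coeff u g = 0
  · exact Or.inl hsum
  · right
    have h1 := (hf u).resolve_left hfu
    have h2 := (hg u).resolve_left hgu
    have := V.val_add hfu hgu hsum
    rcases le_or_gt (V.val (coeff u f)) (V.val (coeff u g)) with h | h
    · rw [min_eq_left h] at this; linarith
    · rw [min_eq_right (le_of_lt h)] at this; linarith

lemma okw_C_mul {w : Fin m → ℝ} {a : K} (ha : a = 0 ∨ 0 ≤ V.val a)
    {f : MvPolynomial (Fin m) K} (hf : V.okw w f) : V.okw w (C a * f) := by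
  intro u
  rw [coeff_C_mul]
  rcases ha with ha | ha
  · exact Or.inl (by rw [ha, zero_mul])
  by_cases hc : a * coeff u f = 0
  · exact Or.inl hc
  · right
    have ha0 : a ≠ 0 := fun h => hc (by rw [h, zero_mul])
    have hc0 : coeff u f ≠ 0 := fun h => hc (by rw [h, mul_zero])
    have h1 := (hf u).resolve_left hc0
    rw [V.val_mul ha0 hc0]
    linarith

lemma redw_add {w : Fin m → ℝ} (hw : ∀ i, w i ∈ V.Gamma) {f g : MvPolynomial (Fin m) K}
    (hf : V.okw w f) (hg : V.okw w g) : V.redw w (f + g) = V.redw w f + V.redw w g := by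
  ext u
  rw [coeff_add, V.coeff_redw, V.coeff_redw, V.coeff_redw, coeff_add, mul_add]
  exact V.res_add (V.okw_cond hw hf u) (V.okw_cond hw hg u)

lemma okw_sum {w : Fin m → ℝ} {ι : Type*} (s : Finset ι) (h : ι → MvPolynomial (Fin m) K)
    (hok : ∀ j ∈ s, V.okw w (h j)) : V.okw w (∑ j ∈ s, h j) := by
  classical
  induction s using Finset.induction with
  | empty => simpa using V.okw_zero w
  | insert _ _ hx ih =>
      rw [Finset.sum_insert hx]
      exact V.okw_add (hok _ (Finset.mem_insert_self _ _))
        (ih fun j hj => hok j (Finset.mem_insert_of_mem hj))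

lemma redw_sum {w : Fin m → ℝ} (hw : ∀ i, w i ∈ V.Gamma) {ι : Type*} (s : Finset ι)
    (h : ι → MvPolynomial (Fin m) K) (hok : ∀ j ∈ s, V.okw w (h j)) :
    V.redw w (∑ j ∈ s, h j) = ∑ j ∈ s, V.redw w (h j) := by
  classical
  induction s using Finset.induction with
  | empty => simp [redw]
  | insert _ _ hx ih =>
      rw [Finset.sum_insert hx, Finset.sum_insert hx,
        V.redw_add hw (hok _ (Finset.mem_insert_self _ _))
          (V.okw_sum _ _ fun j hj => hok j (Finset.mem_insert_of_mem hj)),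
        ih fun j hj => hok j (Finset.mem_insert_of_mem hj)]

lemma redw_C_mul {w : Fin m → ℝ} (hw : ∀ i, w i ∈ V.Gamma) {a : K} (ha : a = 0 ∨ 0 ≤ V.val a)
    {f : MvPolynomial (Fin m) K} (hf : V.okw w f) :
    V.redw w (C a * f) = V.res a • V.redw w f := by
  ext u
  rw [V.coeff_redw, coeff_smul, V.coeff_redw, coeff_C_mul]
  rw [show V.t (dotN w u) * (a * coeff u f) = a * (V.t (dotN w u) * coeff u f) by ring]
  rw [V.res_mul ha (V.okw_cond hw hf u)]
  rfl

lemma redw_eq_initialForm {w : Fin m → ℝ} (hw : ∀ i, w i ∈ V.Gamma)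
    {f : MvPolynomial (Fin m) K} (h : V.trop f w = 0) :
    V.redw w f = V.initialForm w f := by
  ext u
  rw [V.coeff_redw, V.coeff_initialForm]
  by_cases hc : u ∈ f.support ∧ V.val (coeff u f) + dotN w u = V.trop f w
  · rw [if_pos hc]
    have : dotN w u = -(V.val (coeff u f)) := by
      have := hc.2; rw [h] at this; linarith
    rw [this]
  · rw [if_neg hc]
    by_cases hu : u ∈ f.support
    · have hne : V.val (coeff u f) + dotN w u ≠ V.trop f w := fun hh => hc ⟨hu, hh⟩
      have hgt : 0 < V.val (coeff u f) + dotN w u := by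
        have hle := V.trop_le (w := w) hu
        rw [h] at hle hne
        cases lt_or_eq_of_le hle with
        | inl hlt => exact hlt
        | inr heq => exact absurd heq.symm hne
      have hcne : coeff u f ≠ 0 := mem_support_iff.1 hu
      have htne : V.t (dotN w u) ≠ 0 := V.t_ne_zero (V.dotN_mem_Gamma hw u)
      have hvne : V.val (V.t (dotN w u) * coeff u f) = dotN w u + V.val (coeff u f) := by
        rw [V.val_mul htne hcne, V.val_t' (V.dotN_mem_Gamma hw u)]
      have hpos : 0 < V.val (V.t (dotN w u) * coeff u f) := by rw [hvne]; linarith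
      exact (V.res_eq_zero_iff (mul_ne_zero htne hcne) (le_of_lt hpos)).2 hpos
    · rw [notMem_support_iff.1 hu, mul_zero, V.res_zero]

lemma redw_eq_zero {w : Fin m → ℝ} (hw : ∀ i, w i ∈ V.Gamma)
    {f : MvPolynomial (Fin m) K} (h : 0 < V.trop f w) : V.redw w f = 0 := by
  ext u
  rw [V.coeff_redw, coeff_zero]
  by_cases hu : u ∈ f.support
  · have hle := V.trop_le (w := w) hu
    have hcne : coeff u f ≠ 0 := mem_support_iff.1 hu
    have htne : V.t (dotN w u) ≠ 0 := V.t_ne_zero (V.dotN_mem_Gamma hw u)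
    have hvne : V.val (V.t (dotN w u) * coeff u f) = dotN w u + V.val (coeff u f) := by
      rw [V.val_mul htne hcne, V.val_t' (V.dotN_mem_Gamma hw u)]
    have hpos : 0 < V.val (V.t (dotN w u) * coeff u f) := by rw [hvne]; linarith
    exact (V.res_eq_zero_iff (mul_ne_zero htne hcne) (le_of_lt hpos)).2 hpos
  · rw [notMem_support_iff.1 hu, mul_zero, V.res_zero]

end ValSetup

end Helpers3
section Helpers4

open MvPolynomial Finset Module

namespace ValSetup

variable {K 𝕜 : Type} [Field K] [Field 𝕜] (V : ValSetup K 𝕜) {m : ℕ}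

lemma ne_zero_of_initialForm_ne_zero {w : Fin m → ℝ} {f : MvPolynomial (Fin m) K}
    (h : V.initialForm w f ≠ 0) : f ≠ 0 := by
  intro h0; rw [h0] at h; exact h (V.initialForm_zero)

/-- Linear independence descends from initial forms (over the residue field) to the
polynomials themselves (over `K`). -/
lemma linearIndependent_of_initialForm {w : Fin m → ℝ} (hw : ∀ i, w i ∈ V.Gamma)
    {ι : Type*} (f : ι → MvPolynomial (Fin m) K)
    (hli : LinearIndependent 𝕜 fun j => V.initialForm w (f j)) :
    LinearIndependent K f := by
  classical
  rw [linearIndependent_iff']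
  intro s a hsum
  by_contra hcon
  push_neg at hcon
  obtain ⟨j₀, hj₀s, hj₀⟩ := hcon
  have hfne : ∀ j, f j ≠ 0 := fun j =>
    V.ne_zero_of_initialForm_ne_zero (hli.ne_zero j)
  set s' := s.filter (fun j => a j ≠ 0) with hs'
  have hs'ne : s'.Nonempty := ⟨j₀, Finset.mem_filter.2 ⟨hj₀s, hj₀⟩⟩
  set τ : ι → ℝ := fun j => V.trop (f j) w with hτ
  have hτΓ : ∀ j, τ j ∈ V.Gamma := fun j => V.trop_mem_Gamma hw (hfne j)
  set b : ι → K := fun j => a j * V.t (τ j) with hb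
  have hbne : ∀ j ∈ s', b j ≠ 0 := by
    intro j hj
    have haj : a j ≠ 0 := (Finset.mem_filter.1 hj).2
    exact mul_ne_zero haj (V.t_ne_zero (hτΓ j))
  obtain ⟨j₁, hj₁s, hj₁eq⟩ := Finset.exists_mem_eq_inf' hs'ne (fun j => V.val (b j))
  set μ : ℝ := s'.inf' hs'ne (fun j => V.val (b j)) with hμ
  have hμΓ : μ ∈ V.Gamma := by rw [hj₁eq]; exact V.val_mem_Gamma (hbne j₁ hj₁s)
  set c : ι → K := fun j => V.t (-μ) * b j with hc
  have hcne : ∀ j ∈ s', c j ≠ 0 := fun j hj =>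
    mul_ne_zero (V.t_ne_zero (V.neg_mem_Gamma hμΓ)) (hbne j hj)
  have hcval : ∀ j ∈ s', 0 ≤ V.val (c j) := by
    intro j hj
    have := Finset.inf'_le (fun j => V.val (b j)) hj
    rw [hc]
    rw [V.val_mul (V.t_ne_zero (V.neg_mem_Gamma hμΓ)) (hbne j hj),
      V.val_t' (V.neg_mem_Gamma hμΓ)]
    rw [← hμ] at this
    linarith
  have hcj₁ : V.val (c j₁) = 0 := by
    rw [hc]
    rw [V.val_mul (V.t_ne_zero (V.neg_mem_Gamma hμΓ)) (hbne j₁ hj₁s),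
      V.val_t' (V.neg_mem_Gamma hμΓ), hj₁eq]
    ring
  set g : ι → MvPolynomial (Fin m) K := fun j => C (V.t (-(τ j))) * f j with hg
  have htropg : ∀ j, V.trop (g j) w = 0 := by
    intro j
    rw [hg]
    show V.trop (C (V.t (-(τ j))) * f j) w = 0
    rw [V.trop_C_t_mul (V.neg_mem_Gamma (hτΓ j)) (hfne j)]
    simp [hτ]
  have hing : ∀ j, V.initialForm w (g j) = V.initialForm w (f j) := fun j =>
    V.initialForm_C_t_mul (V.neg_mem_Gamma (hτΓ j)) (hfne j)
  have hokg : ∀ j, V.okw w (g j) := fun j =>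
    V.okw_of_trop_nonneg (le_of_eq (htropg j).symm)
  -- the rescaled relation
  have hkey : ∑ j ∈ s', C (c j) * g j = 0 := by
    have hterm : ∀ j ∈ s', C (c j) * g j = C (V.t (-μ)) * (a j • f j) := by
      intro j hj
      rw [hg, hc, hb]
      show C (V.t (-μ) * (a j * V.t (τ j))) * (C (V.t (-(τ j))) * f j)
        = C (V.t (-μ)) * (a j • f j)
      have hCC : ∀ (x y : K) (p : MvPolynomial (Fin m) K), C x * (C y * p) = C (x * y) * p := by
        intro x y p; rw [← mul_assoc, ← C_mul]
      rw [smul_eq_C_mul, hCC, hCC]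
      have hmul : V.t (τ j) * V.t (-(τ j)) = 1 := by
        rw [mul_comm]; exact V.t_neg_mul (hτΓ j)
      have harg : V.t (-μ) * (a j * V.t (τ j)) * V.t (-(τ j)) = V.t (-μ) * a j := by
        calc V.t (-μ) * (a j * V.t (τ j)) * V.t (-(τ j))
            = V.t (-μ) * a j * (V.t (τ j) * V.t (-(τ j))) := by ring
          _ = V.t (-μ) * a j := by rw [hmul, mul_one]
      rw [harg]
    rw [Finset.sum_congr rfl hterm, ← Finset.mul_sum]
    have : ∑ j ∈ s', a j • f j = ∑ j ∈ s, a j • f j := by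
      apply Finset.sum_filter_of_ne
      intro j _ hne haj
      exact hne (by rw [haj, zero_smul])
    rw [this, hsum, mul_zero]
  -- reduce
  have hred : ∑ j ∈ s', V.res (c j) • V.initialForm w (f j) = 0 := by
    have h0 : V.redw w (∑ j ∈ s', C (c j) * g j) = 0 := by
      rw [hkey]
      ext u
      rw [V.coeff_redw]
      simp [V.res_zero]
    rw [V.redw_sum hw s' _ (fun j hj =>
      V.okw_C_mul (Or.inr (hcval j hj)) (hokg j))] at h0
    rw [Finset.sum_congr rfl (fun j hj => ?_)] at h0
    · exact h0
    · rw [V.redw_C_mul hw (Or.inr (hcval j hj)) (hokg j),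
        V.redw_eq_initialForm hw (htropg j), hing j]
  have := linearIndependent_iff'.1 hli s' (fun j => V.res (c j)) hred j₁ hj₁s
  exact V.res_ne_zero_of_val_eq_zero (hcne j₁ hj₁s) hcj₁ this

set_option synthInstance.maxHeartbeats 1000000 in
lemma exists_li_initialForms (w : Fin m → ℝ) :
    ∀ (r : ℕ) (W : Submodule K (MvPolynomial (Fin m) K)), FiniteDimensional K W →
    finrank K W = r →
    ∃ f : Fin r → MvPolynomial (Fin m) K, (∀ i, f i ∈ W) ∧
      LinearIndependent 𝕜 fun i => V.initialForm w (f i) := by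
  intro r
  induction r with
  | zero =>
      intro W _ _
      exact ⟨fun i => 0, fun i => i.elim0, linearIndependent_empty_type⟩
  | succ r ih =>
      intro W hWfd hrank
      have hW0 : ∃ f₀, f₀ ∈ W ∧ f₀ ≠ 0 := by
        by_contra h
        push_neg at h
        have : W = ⊥ := by
          rw [Submodule.eq_bot_iff]
          intro x hx
          exact h x hx
        rw [this, finrank_bot] at hrank
        omega
      obtain ⟨f₀, hf₀W, hf₀⟩ := hW0
      have hin0 : V.initialForm w f₀ ≠ 0 := V.initialForm_ne_zero hf₀
      obtain ⟨u₀, hu₀⟩ := support_nonempty.2 hin0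
      have hu₀f₀ : coeff u₀ f₀ ≠ 0 := by
        have := V.support_initialForm_subset (w := w) (f := f₀) hu₀
        exact mem_support_iff.1 this
      set φ : MvPolynomial (Fin m) K →ₗ[K] K := lcoeff K u₀ with hφ
      set W' : Submodule K (MvPolynomial (Fin m) K) := W ⊓ LinearMap.ker φ with hW'
      haveI hW'fd : FiniteDimensional K W' := Submodule.finiteDimensional_of_le inf_le_left
      have hker : LinearMap.ker (φ.domRestrict W) = Submodule.comap W.subtype W' := by
        rw [LinearMap.ker_domRestrict, hW', Submodule.comap_inf, Submodule.comap_subtype_self,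
          top_inf_eq]
      have hrange : finrank K (LinearMap.range (φ.domRestrict W)) = 1 := by
        have hle : finrank K (LinearMap.range (φ.domRestrict W)) ≤ 1 := by
          have := Submodule.finrank_le (LinearMap.range (φ.domRestrict W))
          simpa using this
        have hne : LinearMap.range (φ.domRestrict W) ≠ ⊥ := by
          intro hbot
          have hmem : φ f₀ ∈ LinearMap.range (φ.domRestrict W) :=
            ⟨⟨f₀, hf₀W⟩, rfl⟩
          rw [hbot] at hmem
          have : φ f₀ = 0 := hmem
          exact hu₀f₀ this
        have hpos : finrank K (LinearMap.range (φ.domRestrict W)) ≠ 0 := by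
          intro h0
          exact hne (Submodule.finrank_eq_zero.1 h0)
        omega
      have hfr : finrank K W' = r := by
        have h1 := LinearMap.finrank_range_add_finrank_ker (φ.domRestrict W)
        rw [hrank, hrange, hker] at h1
        have h2 : finrank K (Submodule.comap W.subtype W') = finrank K W' :=
          (Submodule.comapSubtypeEquivOfLe (inf_le_left : W ⊓ LinearMap.ker φ ≤ W)).finrank_eq
        rw [h2] at h1
        omega
      obtain ⟨f, hfW', hfli⟩ := ih W' hW'fd hfr
      have hW'leW : W' ≤ W := by rw [hW']; exact inf_le_left
      refine ⟨Fin.cons (α := fun _ => MvPolynomial (Fin m) K) f₀ f, ?_, ?_⟩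
      · intro i
        refine Fin.cases ?_ ?_ i
        · exact hf₀W
        · intro j
          exact hW'leW (hfW' j)
      · have hfun : (fun i => V.initialForm w (Fin.cons (α := fun _ => MvPolynomial (Fin m) K) f₀ f i))
            = Fin.cons (V.initialForm w f₀) (fun i => V.initialForm w (f i)) := by
          funext i
          refine Fin.cases ?_ ?_ i
          · simp
          · intro j; simp
        rw [hfun, linearIndependent_fin_cons]
        refine ⟨hfli, ?_⟩
        intro hmem
        have hspan : Submodule.span 𝕜 (Set.range fun i => V.initialForm w (f i))
            ≤ LinearMap.ker (lcoeff 𝕜 u₀) := by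
          rw [Submodule.span_le]
          rintro - ⟨i, rfl⟩
          have hkerφ : coeff u₀ (f i) = 0 := by
            have := (hfW' i)
            rw [hW'] at this
            exact this.2
          have : u₀ ∉ (f i).support := notMem_support_iff.2 hkerφ
          have hnot : u₀ ∉ (V.initialForm w (f i)).support :=
            fun hc => this (V.support_initialForm_subset hc)
          exact notMem_support_iff.1 hnot
        have := hspan hmem
        have : coeff u₀ (V.initialForm w f₀) = 0 := this
        exact (mem_support_iff.1 hu₀) this

end ValSetup

end Helpers4
section Helpers5

open MvPolynomial Finset
open Module (finrank)

variable {m : ℕ}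

lemma Finsupp.degree_add' (a b : Fin m →₀ ℕ) :
    (a + b).degree = a.degree + b.degree := by
  have h := DFunLike.congr_fun (Finsupp.degree_eq_weight_one (σ := Fin m) (R := ℕ))
  rw [h, h, h, map_add]

lemma finite_exps (m d : ℕ) : Set.Finite {v : Fin m →₀ ℕ | v.degree = d} := by
  classical
  refine Set.Finite.subset (Finset.finite_toSet
    (Finset.finsuppAntidiag (Finset.univ : Finset (Fin m)) d)) ?_
  intro v hv
  rw [Finset.mem_coe, Finset.mem_finsuppAntidiag']
  refine ⟨?_, Finset.subset_univ _⟩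
  exact hv

lemma degree_of_mem_support {R : Type*} [CommSemiring R] {f : MvPolynomial (Fin m) R} {d : ℕ}
    (hf : f.IsHomogeneous d) {u : Fin m →₀ ℕ} (hu : u ∈ f.support) : u.degree = d := by
  have h := hf (mem_support_iff.1 hu)
  rw [DFunLike.congr_fun (Finsupp.degree_eq_weight_one (σ := Fin m) (R := ℕ))]
  exact h

lemma mem_span_monomials {R : Type*} [Field R] (S : Set (Fin m →₀ ℕ))
    (h : MvPolynomial (Fin m) R) (hs : (h.support : Set (Fin m →₀ ℕ)) ⊆ S) :
    h ∈ Submodule.span R ((fun v => (monomial v (1:R) : MvPolynomial (Fin m) R)) '' S) := by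
  rw [as_sum h]
  refine Submodule.sum_mem _ fun v hv => ?_
  have : monomial v (coeff v h) = coeff v h • monomial v (1:R) := by
    rw [smul_monomial, smul_eq_mul, mul_one]
  rw [this]
  exact Submodule.smul_mem _ _ (Submodule.subset_span ⟨v, hs hv, rfl⟩)

namespace ValSetup

variable {K 𝕜 : Type} [Field K] [Field 𝕜] (V : ValSetup K 𝕜)

lemma trop_le_homogeneousComponent {w : Fin m → ℝ} {f : MvPolynomial (Fin m) K} {d : ℕ}
    (hd : homogeneousComponent d f ≠ 0) :
    V.trop f w ≤ V.trop (homogeneousComponent d f) w := by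
  refine V.le_trop hd fun u hu => ?_
  have hne : coeff u (homogeneousComponent d f) ≠ 0 := mem_support_iff.1 hu
  have hco : coeff u (homogeneousComponent d f) = coeff u f := by
    rw [coeff_homogeneousComponent] at hne ⊢
    by_cases hdeg : u.degree = d
    · rw [if_pos hdeg]
    · rw [if_neg hdeg] at hne; exact absurd rfl hne
  rw [hco] at hne ⊢
  exact V.trop_le (mem_support_iff.2 hne)

lemma initialForm_eq_sum_components (w : Fin m → ℝ) (f : MvPolynomial (Fin m) K) :
    V.initialForm w f = ∑ d ∈ (Finset.range (f.totalDegree + 1)).filter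
      (fun d => homogeneousComponent d f ≠ 0 ∧
        V.trop (homogeneousComponent d f) w = V.trop f w),
      V.initialForm w (homogeneousComponent d f) := by
  classical
  ext u
  rw [coeff_sum, V.coeff_initialForm]
  set D := (Finset.range (f.totalDegree + 1)).filter
      (fun d => homogeneousComponent d f ≠ 0 ∧
        V.trop (homogeneousComponent d f) w = V.trop f w) with hD
  have hterm0 : ∀ d ∈ D, d ≠ u.degree → coeff u (V.initialForm w (homogeneousComponent d f)) = 0 := by
    intro d _ hne
    rw [V.coeff_initialForm, if_neg]
    intro hcon
    exact hne ((degree_of_mem_support (homogeneousComponent_isHomogeneous d f) hcon.1)).symm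
  by_cases hA : u ∈ f.support ∧ V.val (coeff u f) + dotN w u = V.trop f w
  · rw [if_pos hA]
    have hcou : coeff u (homogeneousComponent u.degree f) = coeff u f := by
      rw [coeff_homogeneousComponent, if_pos rfl]
    have hcne : coeff u f ≠ 0 := mem_support_iff.1 hA.1
    have hhcne : homogeneousComponent u.degree f ≠ 0 := by
      intro h0
      rw [h0] at hcou
      exact hcne (by rw [← hcou, coeff_zero])
    have husupp : u ∈ (homogeneousComponent u.degree f).support :=
      mem_support_iff.2 (by rw [hcou]; exact hcne)
    have htrophc : V.trop (homogeneousComponent u.degree f) w = V.trop f w := by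
      have h1 := V.trop_le_homogeneousComponent (w := w) hhcne
      have h2 := V.trop_le (w := w) husupp
      rw [hcou, hA.2] at h2
      linarith
    have hmemD : u.degree ∈ D := by
      rw [hD, Finset.mem_filter, Finset.mem_range]
      refine ⟨?_, hhcne, htrophc⟩
      have := le_totalDegree hA.1
      have hdeq : u.degree = u.sum fun _ e => e := rfl
      omega
    rw [Finset.sum_eq_single_of_mem u.degree hmemD (fun d hd hne => hterm0 d hd hne)]
    rw [V.coeff_initialForm, if_pos]
    · rw [hcou]
    · exact ⟨husupp, by rw [hcou, htrophc]; exact hA.2⟩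
  · rw [if_neg hA]
    symm
    refine Finset.sum_eq_zero fun d hd => ?_
    by_cases hdu : d = u.degree
    · rw [V.coeff_initialForm, if_neg]
      intro hcon
      obtain ⟨hmem, heq⟩ := hcon
      have hdeg : u.degree = d :=
        degree_of_mem_support (homogeneousComponent_isHomogeneous d f) hmem
      have hco : coeff u (homogeneousComponent d f) = coeff u f := by
        rw [coeff_homogeneousComponent, if_pos hdeg]
      rw [hD, Finset.mem_filter] at hd
      apply hA
      constructor
      · rw [MvPolynomial.mem_support_iff, ← hco]
        exact MvPolynomial.mem_support_iff.1 hmem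
      · rw [← hd.2.2, ← heq, hco]
    · exact hterm0 d hd (fun h => hdu h)
end ValSetup

end Helpers5
section Helpers6

open MvPolynomial Finset
open Module (finrank)

namespace ValSetup

variable {K 𝕜 : Type} [Field K] [Field 𝕜] {m : ℕ}

set_option maxHeartbeats 1000000 in
set_option synthInstance.maxHeartbeats 1000000 in
lemma key_degree (V : ValSetup K 𝕜)
    {w' w'' : Fin m → ℝ} (hw' : ∀ i, w' i ∈ V.Gamma) (hw'' : ∀ i, w'' i ∈ V.Gamma)
    (I : Ideal (MvPolynomial (Fin m) K)) (hI : IsHomogIdeal I)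
    {σ : ℕ} (g : Fin σ → MvPolynomial (Fin m) K) (u : Fin σ → (Fin m →₀ ℕ))
    (hgI : ∀ i, g i ∈ I)
    (hlead : ∀ i, coeff (u i) (g i) = 1)
    (hGB : V.initialIdeal w' I
      = Ideal.span (Set.range fun i => (monomial (u i) 1 : MvPolynomial (Fin m) 𝕜)))
    (hstrict' : ∀ i, ∀ v ∈ (g i).support, v ≠ u i →
      dotN w' (u i) < V.val (coeff v (g i)) + dotN w' v)
    (hstrict'' : ∀ i, ∀ v ∈ (g i).support, v ≠ u i →
      dotN w'' (u i) < V.val (coeff v (g i)) + dotN w'' v)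
    (d : ℕ) {f : MvPolynomial (Fin m) K} (hf : f ∈ I) (hfh : f.IsHomogeneous d) :
    V.initialForm w'' f ∈ V.initialIdeal w' I := by
  classical
  -- the range identity for the monomial generators
  have hrange : (Set.range fun i => (monomial (u i) 1 : MvPolynomial (Fin m) 𝕜))
      = (fun v => (monomial v 1 : MvPolynomial (Fin m) 𝕜)) '' Set.range u := by
    rw [← Set.range_comp]; rfl
  -- the homogeneous truncations of the Gröbner basis elements
  set gh : Fin σ → MvPolynomial (Fin m) K :=
    fun i => homogeneousComponent ((u i).degree) (g i) with hgh
  have hghco : ∀ i, coeff (u i) (gh i) = 1 := by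
    intro i
    rw [hgh]
    show coeff (u i) (homogeneousComponent ((u i).degree) (g i)) = 1
    rw [coeff_homogeneousComponent, if_pos rfl, hlead i]
  have hghne : ∀ i, gh i ≠ 0 := by
    intro i h0
    have := hghco i
    rw [h0, coeff_zero] at this
    exact one_ne_zero this.symm
  have hghsupp : ∀ i, (gh i).support ⊆ (g i).support := by
    intro i v hv
    have hne : coeff v (gh i) ≠ 0 := mem_support_iff.1 hv
    rw [hgh] at hne
    replace hne : coeff v (homogeneousComponent ((u i).degree) (g i)) ≠ 0 := hne
    rw [coeff_homogeneousComponent] at hne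
    by_cases hd : v.degree = (u i).degree
    · rw [if_pos hd] at hne; exact mem_support_iff.2 hne
    · rw [if_neg hd] at hne; exact absurd rfl hne
  have hghcoes : ∀ i, ∀ v ∈ (gh i).support, coeff v (gh i) = coeff v (g i) := by
    intro i v hv
    have hne : coeff v (gh i) ≠ 0 := mem_support_iff.1 hv
    rw [hgh] at hne ⊢
    replace hne : coeff v (homogeneousComponent ((u i).degree) (g i)) ≠ 0 := hne
    show coeff v (homogeneousComponent ((u i).degree) (g i)) = coeff v (g i)
    rw [coeff_homogeneousComponent] at hne ⊢
    by_cases hd : v.degree = (u i).degree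
    · rw [if_pos hd]
    · rw [if_neg hd] at hne; exact absurd rfl hne
  have hghI : ∀ i, gh i ∈ I := fun i => hI (g i) (hgI i) _
  have hghhom : ∀ i, (gh i).IsHomogeneous ((u i).degree) := fun i =>
    homogeneousComponent_isHomogeneous _ _
  have hstr' : ∀ i, ∀ v ∈ (gh i).support, v ≠ u i →
      dotN w' (u i) < V.val (coeff v (gh i)) + dotN w' v := by
    intro i v hv hne
    rw [hghcoes i v hv]
    exact hstrict' i v (hghsupp i hv) hne
  have hstr'' : ∀ i, ∀ v ∈ (gh i).support, v ≠ u i →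
      dotN w'' (u i) < V.val (coeff v (gh i)) + dotN w'' v := by
    intro i v hv hne
    rw [hghcoes i v hv]
    exact hstrict'' i v (hghsupp i hv) hne
  have hin' : ∀ i, V.initialForm w' (gh i) = monomial (u i) 1 := fun i =>
    V.initialForm_of_strict (hghco i) (hstr' i)
  have hin'' : ∀ i, V.initialForm w'' (gh i) = monomial (u i) 1 := fun i =>
    V.initialForm_of_strict (hghco i) (hstr'' i)
  -- subspaces
  set Wd : Submodule K (MvPolynomial (Fin m) K) :=
    (Submodule.restrictScalars K (I : Submodule (MvPolynomial (Fin m) K)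
      (MvPolynomial (Fin m) K))) ⊓ homogeneousSubmodule (Fin m) K d with hWd
  have hmemWd : ∀ {p : MvPolynomial (Fin m) K}, p ∈ Wd ↔ p ∈ I ∧ p.IsHomogeneous d := by
    intro p
    rw [hWd, Submodule.mem_inf, Submodule.restrictScalars_mem, mem_homogeneousSubmodule]
  set Sd : Set (Fin m →₀ ℕ) := {v | v.degree = d} with hSd
  have hSdfin : Sd.Finite := finite_exps m d
  set HdK : Submodule K (MvPolynomial (Fin m) K) :=
    Submodule.span K ((fun v => monomial v (1:K)) '' Sd) with hHdK
  set Hdk : Submodule 𝕜 (MvPolynomial (Fin m) 𝕜) :=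
    Submodule.span 𝕜 ((fun v => monomial v (1:𝕜)) '' Sd) with hHdk
  haveI hfinHdK : FiniteDimensional K HdK :=
    FiniteDimensional.span_of_finite K (hSdfin.image _)
  haveI hfinHdk : FiniteDimensional 𝕜 Hdk :=
    FiniteDimensional.span_of_finite 𝕜 (hSdfin.image _)
  have hWdle : Wd ≤ HdK := by
    intro p hp
    exact mem_span_monomials Sd p (fun v hv => degree_of_mem_support (hmemWd.1 hp).2 hv)
  haveI hWdfd : FiniteDimensional K Wd := Submodule.finiteDimensional_of_le hWdle
  set r : ℕ := finrank K Wd with hr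
  set A : Submodule 𝕜 (MvPolynomial (Fin m) 𝕜) :=
    Submodule.span 𝕜 {h | ∃ p ∈ Wd, h = V.initialForm w'' p} with hA
  set A' : Submodule 𝕜 (MvPolynomial (Fin m) 𝕜) :=
    Submodule.span 𝕜 {h | ∃ p ∈ Wd, h = V.initialForm w' p} with hA'
  have hgensupp : ∀ (w : Fin m → ℝ) (p : MvPolynomial (Fin m) K), p ∈ Wd →
      V.initialForm w p ∈ Hdk := by
    intro w p hp
    refine mem_span_monomials Sd _ (fun v hv => ?_)
    have hv' : v ∈ p.support := V.support_initialForm_subset hv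
    exact degree_of_mem_support (hmemWd.1 hp).2 hv'
  have hAle : A ≤ Hdk := by
    rw [hA, Submodule.span_le]
    rintro - ⟨p, hp, rfl⟩
    exact hgensupp w'' p hp
  have hA'le : A' ≤ Hdk := by
    rw [hA', Submodule.span_le]
    rintro - ⟨p, hp, rfl⟩
    exact hgensupp w' p hp
  haveI hAfd : FiniteDimensional 𝕜 A := Submodule.finiteDimensional_of_le hAle
  haveI hA'fd : FiniteDimensional 𝕜 A' := Submodule.finiteDimensional_of_le hA'le
  -- lower bound : r ≤ finrank A'
  have hrA' : r ≤ finrank 𝕜 A' := by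
    obtain ⟨fam, hfamW, hfamli⟩ := V.exists_li_initialForms w' r Wd hWdfd rfl
    have hmemA' : ∀ i, V.initialForm w' (fam i) ∈ A' := fun i =>
      Submodule.subset_span ⟨fam i, hfamW i, rfl⟩
    set famA : Fin r → ↥A' := fun i => ⟨V.initialForm w' (fam i), hmemA' i⟩ with hfamA
    have hliA : LinearIndependent 𝕜 famA := by
      apply LinearIndependent.of_comp A'.subtype
      exact hfamli
    have := hliA.fintype_card_le_finrank
    simpa using this
  -- upper bound : finrank A ≤ r
  have hAr : finrank 𝕜 A ≤ r := by
    obtain ⟨bset, hbsub, hbspan, hbli⟩ :=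
      exists_linearIndependent 𝕜 {h | ∃ p ∈ Wd, h = V.initialForm w'' p}
    have hbsubA : ∀ x ∈ bset, x ∈ A := fun x hx => Submodule.subset_span (hbsub hx)
    have hbliA : LinearIndependent 𝕜 (fun x : bset => (⟨x, hbsubA x x.2⟩ : ↥A)) := by
      apply LinearIndependent.of_comp A.subtype
      exact hbli
    haveI : Finite ↥bset := hbliA.finite
    haveI : Fintype ↥bset := Fintype.ofFinite _
    have hfrA : finrank 𝕜 A = bset.toFinset.card := by
      rw [hA, ← hbspan]
      exact finrank_span_set_eq_card hbli
    -- choose preimages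
    have hchoice : ∀ x : bset, ∃ p, p ∈ Wd ∧ V.initialForm w'' p = (x : MvPolynomial (Fin m) 𝕜) := by
      rintro ⟨x, hx⟩
      obtain ⟨p, hp, hpx⟩ := hbsub hx
      exact ⟨p, hp, hpx.symm⟩
    choose P hPW hPval using hchoice
    have hPli : LinearIndependent 𝕜 (fun x : bset => V.initialForm w'' (P x)) := by
      have : (fun x : bset => V.initialForm w'' (P x)) = (fun x : bset => (x : MvPolynomial (Fin m) 𝕜)) := by
        funext x; exact hPval x
      rw [this]
      exact hbli
    have hPliK : LinearIndependent K P := V.linearIndependent_of_initialForm hw'' P hPli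
    have hPliW : LinearIndependent K (fun x : bset => (⟨P x, hPW x⟩ : ↥Wd)) := by
      apply LinearIndependent.of_comp Wd.subtype
      exact hPliK
    have hcard := hPliW.fintype_card_le_finrank
    rw [hfrA]
    rw [Set.toFinset_card]
    simpa using hcard
  -- the monomial space B
  set Vs : Set (Fin m →₀ ℕ) := {v | v.degree = d ∧ ∃ i, u i ≤ v} with hVs
  set B : Submodule 𝕜 (MvPolynomial (Fin m) 𝕜) :=
    Submodule.span 𝕜 ((fun v => monomial v (1:𝕜)) '' Vs) with hB
  haveI hBfd : FiniteDimensional 𝕜 B :=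
    FiniteDimensional.span_of_finite 𝕜 ((hSdfin.subset (fun v hv => hv.1)).image _)
  -- A' ≤ B
  have hA'B : A' ≤ B := by
    rw [hA', Submodule.span_le]
    rintro - ⟨p, hp, rfl⟩
    have hpI : p ∈ I := (hmemWd.1 hp).1
    have hinM : V.initialForm w' p ∈ V.initialIdeal w' I :=
      Ideal.subset_span ⟨p, hpI, rfl⟩
    rw [hGB, hrange] at hinM
    have hdom := mem_ideal_span_monomial_image.1 hinM
    refine mem_span_monomials Vs _ (fun v hv => ?_)
    obtain ⟨si, ⟨i, rfl⟩, hle⟩ := hdom v hv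
    refine ⟨?_, ⟨i, hle⟩⟩
    exact degree_of_mem_support (hmemWd.1 hp).2 (V.support_initialForm_subset hv)
  -- B ≤ A
  have hBA : B ≤ A := by
    rw [hB, Submodule.span_le]
    rintro - ⟨v, ⟨hvd, i, hvi⟩, rfl⟩
    set q : MvPolynomial (Fin m) K := monomial (v - u i) 1 * gh i with hq
    have hqI : q ∈ I := Ideal.mul_mem_left _ _ (hghI i)
    have hsum : (v - u i).degree + (u i).degree = d := by
      rw [← Finsupp.degree_add', tsub_add_cancel_of_le hvi, hvd]
    have hqhom : q.IsHomogeneous d := by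
      have := (isHomogeneous_monomial (1:K) (rfl : (v - u i).degree = (v - u i).degree)).mul
        (hghhom i)
      rwa [hsum] at this
    have hqWd : q ∈ Wd := hmemWd.2 ⟨hqI, hqhom⟩
    have hqin : V.initialForm w'' q = monomial v 1 := by
      rw [hq]
      show V.initialForm w'' (monomial (v - u i) 1 * gh i) = monomial v 1
      rw [V.initialForm_monMul (v - u i) (hghne i), hin'' i, monomial_mul,
        tsub_add_cancel_of_le hvi, one_mul]
    show (monomial v (1:𝕜) : MvPolynomial (Fin m) 𝕜) ∈ (A : Set (MvPolynomial (Fin m) 𝕜))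
    rw [← hqin]
    exact Submodule.subset_span ⟨q, hqWd, rfl⟩
  -- B ≤ the initial ideal
  have hBM : ∀ x ∈ B, x ∈ V.initialIdeal w' I := by
    intro x hx
    rw [hGB, hrange]
    have hBM' : B ≤ Submodule.restrictScalars 𝕜 (Ideal.span
        ((fun v => (monomial v 1 : MvPolynomial (Fin m) 𝕜)) '' Set.range u)) := by
      rw [hB, Submodule.span_le]
      rintro - ⟨v, ⟨hvd, i, hvi⟩, rfl⟩
      rw [SetLike.mem_coe, Submodule.restrictScalars_mem]
      refine mem_ideal_span_monomial_image.2 (fun xi hxi => ?_)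
      have hxiv : xi = v := by
        by_contra hne
        have hmem := mem_support_iff.1 hxi
        rw [coeff_monomial, if_neg (fun h => hne h.symm)] at hmem
        exact hmem rfl
      exact ⟨u i, ⟨i, rfl⟩, hxiv ▸ hvi⟩
    have := hBM' hx
    rwa [Submodule.restrictScalars_mem] at this
  -- conclude A = B
  have hfrank : finrank 𝕜 A ≤ finrank 𝕜 B := by
    have h1 : finrank 𝕜 A' ≤ finrank 𝕜 B := Submodule.finrank_mono hA'B
    omega
  have hABeq : B = A := Submodule.eq_of_le_of_finrank_le hBA hfrank
  have hfA : V.initialForm w'' f ∈ A :=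
    Submodule.subset_span ⟨f, hmemWd.2 ⟨hf, hfh⟩, rfl⟩
  rw [← hABeq] at hfA
  exact hBM _ hfA

end ValSetup

end Helpers6
section Helpers7

open MvPolynomial Finset

lemma dotN_convex {m : ℕ} (x y : Fin m → ℝ) (c : ℝ) (u : Fin m →₀ ℕ) :
    dotN (x + c • (y - x)) u = (1 - c) * dotN x u + c * dotN y u := by
  rw [dotN, dotN, dotN, Finset.mul_sum, Finset.mul_sum, ← Finset.sum_add_distrib]
  refine Finset.sum_congr rfl fun i _ => ?_
  simp only [Pi.add_apply, Pi.smul_apply, Pi.sub_apply, smul_eq_mul]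
  ring

end Helpers7
/-- (From the proof of Theorem 2.5.)  Let `I ⊆ K[x_0,…,x_n]` be a homogeneous ideal and
`w' ∈ Γ^{n+1}` with `in_{w'}(I)` a monomial ideal.  Let `g_1,…,g_s` be a Gröbner basis for
`I` with respect to `w'`, with `g_i = x^{u_i} + Σ_v c_{iv} x^v`, `in_{w'}(g_i) = x^{u_i}`,
and `c_{iv} ≠ 0 ⇒ x^v ∉ in_{w'}(I)`.  Then
`closure C_I[w'] = {x ∈ ℝ^{n+1} : x·u_i ≤ val(c_{iv}) + x·v for all i and all v with
c_{iv} ≠ 0}`. -/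
theorem closure_groebnerRegion_eq {K 𝕜 : Type} [Field K] [Field 𝕜] (V : ValSetup K 𝕜)
    (hdense : Dense V.Gamma) (hQ : ∀ q : ℚ, (q : ℝ) ∈ V.Gamma) {n : ℕ}
    (I : Ideal (MvPolynomial (Fin (n+1)) K)) (hI : IsHomogIdeal I)
    (w' : Fin (n+1) → ℝ) (hw' : ∀ i, w' i ∈ V.Gamma)
    (hmono : IsMonomialIdeal (V.initialIdeal w' I))
    (s : ℕ) (g : Fin s → MvPolynomial (Fin (n+1)) K) (u : Fin s → (Fin (n+1) →₀ ℕ))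
    (hgI : ∀ i, g i ∈ I)
    (hlead : ∀ i, coeff (u i) (g i) = 1)
    (hin : ∀ i, V.initialForm w' (g i) = monomial (u i) 1)
    (hGB : V.initialIdeal w' I
      = Ideal.span (Set.range fun i => (monomial (u i) 1 : MvPolynomial (Fin (n+1)) 𝕜)))
    (hred : ∀ i, ∀ v ∈ (g i).support, v ≠ u i →
      (monomial v 1 : MvPolynomial (Fin (n+1)) 𝕜) ∉ V.initialIdeal w' I) :
    closure (V.groebnerRegion I w')
      = {x : Fin (n+1) → ℝ | ∀ i, ∀ v ∈ (g i).support, v ≠ u i →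
          dotN x (u i) ≤ V.val (coeff v (g i)) + dotN x v} := by
  classical
  have hrange : (Set.range fun i => (monomial (u i) 1 : MvPolynomial (Fin (n+1)) 𝕜))
      = (fun v => (monomial v 1 : MvPolynomial (Fin (n+1)) 𝕜)) '' Set.range u := by
    rw [← Set.range_comp]; rfl
  have hstrict' : ∀ i, ∀ v ∈ (g i).support, v ≠ u i →
      dotN w' (u i) < V.val (coeff v (g i)) + dotN w' v :=
    fun i => V.strict_of_initialForm_monomial (hlead i) (hin i)
  set RHS := {x : Fin (n+1) → ℝ | ∀ i, ∀ v ∈ (g i).support, v ≠ u i →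
      dotN x (u i) ≤ V.val (coeff v (g i)) + dotN x v} with hRHS
  set SS := {x : Fin (n+1) → ℝ | ∀ i, ∀ v ∈ (g i).support, v ≠ u i →
      dotN x (u i) < V.val (coeff v (g i)) + dotN x v} with hSS
  set D := {x : Fin (n+1) → ℝ | ∀ i, x i ∈ V.Gamma} with hD
  -- Part 1: RHS is closed
  have hclosed : IsClosed RHS := by
    have heq : RHS = ⋂ (i : Fin s), ⋂ (v : Fin (n+1) →₀ ℕ), ⋂ (_ : v ∈ (g i).support),
        ⋂ (_ : v ≠ u i), {x : Fin (n+1) → ℝ |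
          dotN x (u i) ≤ V.val (coeff v (g i)) + dotN x v} := by
      ext x
      simp only [hRHS, Set.mem_iInter, Set.mem_setOf_eq]
    rw [heq]
    refine isClosed_iInter fun i => isClosed_iInter fun v => isClosed_iInter fun _ =>
      isClosed_iInter fun _ => ?_
    exact isClosed_le (dotN_continuous (u i)) (continuous_const.add (dotN_continuous v))
  -- Part 2: the Gröbner region is contained in RHS
  have hCsub : V.groebnerRegion I w' ⊆ RHS := by
    rintro w'' ⟨hw''Γ, hid⟩
    intro i v hv hne
    by_contra hlt
    push_neg at hlt
    have hgne : g i ≠ 0 := by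
      intro h0; rw [h0] at hv; simp at hv
    have hin'' : V.initialForm w'' (g i) ∈ V.initialIdeal w'' I :=
      Ideal.subset_span ⟨g i, hgI i, rfl⟩
    rw [hid, hGB, hrange] at hin''
    have htlt : V.trop (g i) w'' < dotN w'' (u i) := by
      have h1 := V.trop_le (w := w'') hv
      linarith
    obtain ⟨v'', hv''⟩ := support_nonempty.2 (V.initialForm_ne_zero (w := w'') hgne)
    have hv''f : v'' ∈ (g i).support ∧
        V.val (coeff v'' (g i)) + dotN w'' v'' = V.trop (g i) w'' := by
      have := hv''
      rw [V.support_initialForm, Finset.mem_filter] at this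
      exact this
    have hv''ne : v'' ≠ u i := by
      intro h
      rw [h] at hv''f
      have := hv''f.2
      rw [hlead i, V.val_one, zero_add] at this
      linarith
    obtain ⟨si, ⟨j, rfl⟩, hle⟩ := mem_ideal_span_monomial_image.1 hin'' v'' hv''
    have hmonomem : (monomial v'' 1 : MvPolynomial (Fin (n+1)) 𝕜) ∈ V.initialIdeal w' I := by
      rw [hGB, hrange]
      refine mem_ideal_span_monomial_image.2 (fun xi hxi => ?_)
      have hxiv : xi = v'' := by
        by_contra hnexi
        have hmem := mem_support_iff.1 hxi
        rw [coeff_monomial, if_neg (fun h => hnexi h.symm)] at hmem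
        exact hmem rfl
      exact ⟨u j, ⟨j, rfl⟩, hxiv ▸ hle⟩
    exact hred i v'' hv''f.1 hv''ne hmonomem
  -- Part 3a: SS is open
  have hSopen : IsOpen SS := by
    have heq : SS = ⋂ (i : Fin s), ⋂ (v ∈ (g i).support),
        {x : Fin (n+1) → ℝ | v ≠ u i →
          dotN x (u i) < V.val (coeff v (g i)) + dotN x v} := by
      ext x
      simp only [hSS, Set.mem_iInter, Set.mem_setOf_eq]
    rw [heq]
    refine isOpen_iInter_of_finite fun i => ?_
    refine isOpen_biInter_finset fun v _ => ?_
    by_cases hne : v = u i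
    · have : {x : Fin (n+1) → ℝ | v ≠ u i →
          dotN x (u i) < V.val (coeff v (g i)) + dotN x v} = Set.univ := by
        ext x; simp [hne]
      rw [this]; exact isOpen_univ
    · have : {x : Fin (n+1) → ℝ | v ≠ u i →
          dotN x (u i) < V.val (coeff v (g i)) + dotN x v}
          = {x : Fin (n+1) → ℝ | dotN x (u i) < V.val (coeff v (g i)) + dotN x v} := by
        ext x; simp [hne]
      rw [this]
      exact isOpen_lt (dotN_continuous (u i)) (continuous_const.add (dotN_continuous v))
  -- Part 3b: w' ∈ SS
  have hw'S : w' ∈ SS := fun i v hv hne => hstrict' i v hv hne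
  -- Part 3c: SS ∩ Γ-points lie in the Gröbner region
  have hScore : ∀ x ∈ SS, (∀ i, x i ∈ V.Gamma) → x ∈ V.groebnerRegion I w' := by
    intro x hxS hxΓ
    refine ⟨hxΓ, ?_⟩
    have hstrx : ∀ i, ∀ v ∈ (g i).support, v ≠ u i →
        dotN x (u i) < V.val (coeff v (g i)) + dotN x v := fun i v hv hne => hxS i v hv hne
    have hinx : ∀ i, V.initialForm x (g i) = monomial (u i) 1 :=
      fun i => V.initialForm_of_strict (hlead i) (hstrx i)
    apply le_antisymm
    · rw [ValSetup.initialIdeal, Ideal.span_le]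
      rintro - ⟨p, hp, rfl⟩
      rw [SetLike.mem_coe]
      by_cases hp0 : p = 0
      · rw [hp0, V.initialForm_zero]; exact Ideal.zero_mem _
      · rw [V.initialForm_eq_sum_components x p]
        refine Ideal.sum_mem _ fun d hd => ?_
        exact V.key_degree hw' hxΓ I hI g u hgI hlead hGB hstrict' hstrx d (hI p hp d)
          (homogeneousComponent_isHomogeneous d p)
    · rw [hGB, Ideal.span_le]
      rintro - ⟨i, rfl⟩
      rw [SetLike.mem_coe]
      exact Ideal.subset_span ⟨g i, hgI i, (hinx i).symm⟩
  -- Part 3d: density of Γ-points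
  have hDden : Dense D := by
    have := dense_pi (α := fun _ : Fin (n+1) => ℝ) (s := fun _ => V.Gamma)
      Set.univ (fun i _ => hdense)
    have heq : Set.pi Set.univ (fun _ : Fin (n+1) => V.Gamma) = D := by
      ext x; simp [hD, Set.mem_pi]
    rwa [heq] at this
  -- Part 3e: RHS ⊆ closure SS
  have hRclos : RHS ⊆ closure SS := by
    intro x hx
    set y : ℕ → (Fin (n+1) → ℝ) := fun k => x + (1/((k:ℝ)+1)) • (w' - x) with hy
    have hyS : ∀ k, y k ∈ SS := by
      intro k i v hv hne
      have hc0 : (0:ℝ) < 1/((k:ℝ)+1) := by positivity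
      have hc1 : 1/((k:ℝ)+1) ≤ 1 := by
        rw [div_le_one (by positivity)]
        simp
      set c : ℝ := 1/((k:ℝ)+1) with hc
      have h1 : dotN (y k) (u i) = (1-c) * dotN x (u i) + c * dotN w' (u i) :=
        dotN_convex x w' c (u i)
      have h2 : dotN (y k) v = (1-c) * dotN x v + c * dotN w' v :=
        dotN_convex x w' c v
      have hx' : dotN x (u i) ≤ V.val (coeff v (g i)) + dotN x v := hx i v hv hne
      have hw'' : dotN w' (u i) < V.val (coeff v (g i)) + dotN w' v := hstrict' i v hv hne
      rw [h1, h2]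
      nlinarith [mul_le_mul_of_nonneg_left hx' (by linarith : (0:ℝ) ≤ 1 - c),
        mul_lt_mul_of_pos_left hw'' hc0]
    have htend : Filter.Tendsto y Filter.atTop (nhds x) := by
      have h0 : Filter.Tendsto (fun k : ℕ => 1/((k:ℝ)+1)) Filter.atTop (nhds 0) :=
        tendsto_one_div_add_atTop_nhds_zero_nat
      have h1 := h0.smul_const (w' - x)
      rw [zero_smul] at h1
      have h2 := (tendsto_const_nhds :
        Filter.Tendsto (fun _ : ℕ => x) Filter.atTop (nhds x)).add h1
      rw [add_zero] at h2
      exact h2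
    exact mem_closure_of_tendsto htend (Filter.Eventually.of_forall hyS)
  -- assemble
  apply Set.Subset.antisymm
  · exact closure_minimal hCsub hclosed
  · intro x hx
    have h1 : x ∈ closure SS := hRclos hx
    have hsub : SS ⊆ closure (SS ∩ D) := hDden.open_subset_closure_inter hSopen
    have h2 : closure SS ⊆ closure (SS ∩ D) := by
      calc closure SS ⊆ closure (closure (SS ∩ D)) := closure_mono hsub
        _ = closure (SS ∩ D) := closure_closure
    have h3 : SS ∩ D ⊆ V.groebnerRegion I w' := fun y hy => hScore y hy.1 hy.2
    exact closure_mono h3 (h2 h1)
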